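/- The embedding ι: Wⱼ → Wⱼ ⊗ ℂ³ defined by ι(φ) = -((2j+1)(2j+3))^{-1/2} Σᵢ πⱼ(σᵢ)φ ⊗ eᵢ preserves the Hermitian inner product. -/

import Mathlib

open scoped ComplexInnerProductSpace

/-- The embedding `ι : Wⱼ → Wⱼ ⊗ ℂ³`, `ι(φ) = -((2j+1)(2j+3))^{-1/2} Σᵢ πⱼ(σᵢ)φ ⊗ eᵢ`,
preserves the Hermitian inner product.  Here `Wⱼ ⊗ ℂ³` is modelled as `PiLp 2 (Fin 3 → Wⱼ)`
(three orthogonal copies of `Wⱼ`), `A i = πⱼ(σᵢ)` are skew-adjoint and satisfy the Casimir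
identity `Σᵢ πⱼ(σᵢ)² = -(2j+1)(2j+3)·Id`. -/
theorem embedding_isometric (j : ℕ) (W : Type*) [NormedAddCommGroup W]
    [InnerProductSpace ℂ W] [FiniteDimensional ℂ W]
    (A : Fin 3 → W →ₗ[ℂ] W)
    (hskew : ∀ i, LinearMap.adjoint (A i) = -A i)
    (hcas : A 0 ∘ₗ A 0 + A 1 ∘ₗ A 1 + A 2 ∘ₗ A 2
      = (-((2 * (j : ℂ) + 1) * (2 * (j : ℂ) + 3))) • LinearMap.id)
    (ι : W → PiLp 2 fun _ : Fin 3 => W)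
    (hι : ∀ φ, ι φ = (WithLp.equiv 2 (∀ _ : Fin 3, W)).symm
      (fun i => (-((Real.sqrt ((2 * (j : ℝ) + 1) * (2 * (j : ℝ) + 3)))⁻¹ : ℝ) : ℂ) • A i φ)) :
    ∀ φ ψ : W, ⟪ι φ, ι ψ⟫ = ⟪φ, ψ⟫ := by
  intro φ ψ
  have hpos : (0:ℝ) < (2 * (j : ℝ) + 1) * (2 * (j : ℝ) + 3) := by positivity
  set x : ℝ := (2 * (j : ℝ) + 1) * (2 * (j : ℝ) + 3) with hx
  set r : ℝ := -((Real.sqrt x)⁻¹) with hr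
  have hr2 : r * r = x⁻¹ := by
    rw [hr, neg_mul_neg, ← mul_inv, Real.mul_self_sqrt hpos.le]
  have key : ∀ i : Fin 3, ⟪A i φ, A i ψ⟫ = -⟪φ, A i (A i ψ)⟫ := by
    intro i
    have h1 : A i φ = -(LinearMap.adjoint (A i)) φ := by rw [hskew]; simp
    rw [h1, inner_neg_left, LinearMap.adjoint_inner_left]
  have hxc : ((x : ℂ)) = (2 * (j : ℂ) + 1) * (2 * (j : ℂ) + 3) := by
    rw [hx]; push_cast; ring
  rw [hι, hι, PiLp.inner_apply]
  simp only [WithLp.equiv_symm_apply, PiLp.toLp_apply, inner_smul_left, inner_smul_right,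
    Complex.ofReal_neg, map_neg, Complex.conj_ofReal]
  rw [Fin.sum_univ_three, key 0, key 1, key 2]
  have hsum : A 0 (A 0 ψ) + A 1 (A 1 ψ) + A 2 (A 2 ψ)
      = (-((2 * (j : ℂ) + 1) * (2 * (j : ℂ) + 3))) • ψ := by
    have := congrArg (fun T => T ψ) hcas
    simpa using this
  have hinner : ⟪φ, A 0 (A 0 ψ)⟫ + ⟪φ, A 1 (A 1 ψ)⟫ + ⟪φ, A 2 (A 2 ψ)⟫
      = (-((2 * (j : ℂ) + 1) * (2 * (j : ℂ) + 3))) * ⟪φ, ψ⟫ := by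
    rw [← inner_add_right, ← inner_add_right, hsum, inner_smul_right]
  have hsc : (-((((Real.sqrt x)⁻¹ : ℝ)) : ℂ)) * (-((((Real.sqrt x)⁻¹ : ℝ)) : ℂ))
      * ((2 * (j : ℂ) + 1) * (2 * (j : ℂ) + 3)) = 1 := by
    rw [neg_mul_neg, ← Complex.ofReal_mul, ← mul_inv, Real.mul_self_sqrt hpos.le, ← hxc]
    rw [← Complex.ofReal_mul, inv_mul_cancel₀ hpos.ne', Complex.ofReal_one]
  linear_combination (-((-((((Real.sqrt x)⁻¹ : ℝ)) : ℂ)) * (-((((Real.sqrt x)⁻¹ : ℝ)) : ℂ)))) * hinner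
    + ⟪φ, ψ⟫ * hsc
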